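/- Let Y be a set, g : Y → Y a map, and h : Y → ℝ a function with h(y) ≥ 1 for every y ∈ Y. Suppose there are an integer m ≥ 1 and real numbers a ≥ 2 and C ≥ 0 such that h(g^m(y)) ≤ a·h(y) + C for every y ∈ Y. Then for every x ∈ Y, limsup_{n→∞} h(g^n(x))^{1/n} ≤ a^{1/m}. -/

import Mathlib

open Filter Real

theorem stmt13 {Y : Type*} (g : Y → Y) (h : Y → ℝ) (h1 : ∀ y : Y, 1 ≤ h y)
    (m : ℕ) (hm : 1 ≤ m) (a C : ℝ) (ha : 2 ≤ a) (hC : 0 ≤ C)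
    (H : ∀ y : Y, h (g^[m] y) ≤ a * h y + C) (x : Y) :
    Filter.limsup (fun n : ℕ => (h (g^[n] x)) ^ ((n : ℝ)⁻¹)) Filter.atTop
      ≤ a ^ ((m : ℝ)⁻¹) := by
  have ha1 : (1:ℝ) ≤ a := by linarith
  have ha0 : (0:ℝ) ≤ a := by linarith
  -- iteration lemma
  have key : ∀ q : ℕ, ∀ y : Y, h (g^[q*m] y) ≤ a^q * h y + (a^q - 1) * C := by
    intro q
    induction q with
    | zero => intro y; simp
    | succ q ih =>
      intro y
      have e : g^[(q+1)*m] y = g^[m] (g^[q*m] y) := by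
        rw [add_mul, one_mul, add_comm, Function.iterate_add_apply]
      rw [e]
      have h2 := ih y
      have h3 := H (g^[q*m] y)
      have haq : (1:ℝ) ≤ a^q := one_le_pow₀ ha1
      have hy := h1 y
      have hps : a^(q+1) = a^q * a := pow_succ a q
      nlinarith [pow_nonneg ha0 q]
  -- bound over remainders
  have hne : (Finset.range m).Nonempty := ⟨0, Finset.mem_range.mpr hm⟩
  set M : ℝ := (Finset.range m).sup' hne (fun r => h (g^[r] x)) with hM
  have hM1 : (1:ℝ) ≤ M := le_trans (h1 (g^[0] x)) (Finset.le_sup' (fun r => h (g^[r] x)) (Finset.mem_range.mpr hm))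
  have hD1 : (1:ℝ) ≤ M + C := by linarith
  have hD0 : (0:ℝ) < M + C := by linarith
  -- main pointwise bound
  have main : ∀ n : ℕ, 1 ≤ n →
      (h (g^[n] x)) ^ ((n : ℝ)⁻¹) ≤ a ^ ((m : ℝ)⁻¹) * (M + C) ^ ((n : ℝ)⁻¹) := by
    intro n hn
    set q := n / m with hq
    set r := n % m with hr
    have hrm : r < m := Nat.mod_lt _ hm
    have hMr : h (g^[r] x) ≤ M := Finset.le_sup' (fun r => h (g^[r] x)) (Finset.mem_range.mpr hrm)
    have e : g^[n] x = g^[q*m] (g^[r] x) := by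
      conv_lhs => rw [← Nat.div_add_mod n m]
      rw [mul_comm m q, Function.iterate_add_apply]
    have haq : (1:ℝ) ≤ a^q := one_le_pow₀ ha1
    have b1 : h (g^[n] x) ≤ a^q * (M + C) := by
      have := key q (g^[r] x)
      rw [e]
      nlinarith
    have hinv : (0:ℝ) ≤ (n:ℝ)⁻¹ := by positivity
    have b2 : (h (g^[n] x)) ^ ((n : ℝ)⁻¹) ≤ (a^q * (M + C)) ^ ((n : ℝ)⁻¹) :=
      Real.rpow_le_rpow (le_trans zero_le_one (h1 _)) b1 hinv
    have b3 : (a^q * (M + C)) ^ ((n : ℝ)⁻¹)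
        = (a^q : ℝ) ^ ((n : ℝ)⁻¹) * (M + C) ^ ((n : ℝ)⁻¹) :=
      Real.mul_rpow (by positivity) (le_of_lt hD0)
    have b4 : (a^q : ℝ) ^ ((n : ℝ)⁻¹) = a ^ ((q : ℝ) * (n : ℝ)⁻¹) := by
      rw [← Real.rpow_natCast a q, ← Real.rpow_mul ha0]
    have hqn : (q : ℝ) * (n : ℝ)⁻¹ ≤ (m : ℝ)⁻¹ := by
      have hqm : q * m ≤ n := Nat.div_mul_le_self n m
      have hn0 : (0:ℝ) < (n:ℝ) := by exact_mod_cast hn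
      have hm0 : (0:ℝ) < (m:ℝ) := by exact_mod_cast hm
      rw [mul_inv_le_iff₀ hn0, inv_mul_eq_div, le_div_iff₀ hm0]
      exact_mod_cast hqm
    have b5 : a ^ ((q : ℝ) * (n : ℝ)⁻¹) ≤ a ^ ((m : ℝ)⁻¹) :=
      Real.rpow_le_rpow_of_exponent_le ha1 hqn
    calc (h (g^[n] x)) ^ ((n : ℝ)⁻¹) ≤ (a^q * (M + C)) ^ ((n : ℝ)⁻¹) := b2
      _ = a ^ ((q : ℝ) * (n : ℝ)⁻¹) * (M + C) ^ ((n : ℝ)⁻¹) := by rw [b3, b4]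
      _ ≤ a ^ ((m : ℝ)⁻¹) * (M + C) ^ ((n : ℝ)⁻¹) :=
          mul_le_mul_of_nonneg_right b5 (Real.rpow_nonneg (le_of_lt hD0) _)
  -- the majorant tends to a^(1/m)
  have htend : Tendsto (fun n : ℕ => a ^ ((m : ℝ)⁻¹) * (M + C) ^ ((n : ℝ)⁻¹))
      atTop (nhds (a ^ ((m : ℝ)⁻¹))) := by
    have h0 : Tendsto (fun n : ℕ => ((n : ℝ))⁻¹) atTop (nhds 0) :=
      tendsto_inv_atTop_zero.comp tendsto_natCast_atTop_atTop
    have h1' : Tendsto (fun n : ℕ => (M + C) ^ ((n : ℝ)⁻¹)) atTop (nhds 1) := by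
      have hc : ContinuousAt (fun t : ℝ => (M + C) ^ t) 0 :=
        Real.continuousAt_const_rpow (ne_of_gt hD0)
      have := hc.tendsto.comp h0
      simpa [Function.comp_def] using this
    have := h1'.const_mul (a ^ ((m : ℝ)⁻¹))
    simpa using this
  -- conclude
  have hev : ∀ᶠ n : ℕ in atTop,
      (h (g^[n] x)) ^ ((n : ℝ)⁻¹) ≤ a ^ ((m : ℝ)⁻¹) * (M + C) ^ ((n : ℝ)⁻¹) :=
    eventually_atTop.mpr ⟨1, main⟩
  have hcb : IsCoboundedUnder (· ≤ ·) atTop (fun n : ℕ => (h (g^[n] x)) ^ ((n : ℝ)⁻¹)) := by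
    exact isCoboundedUnder_le_of_le (x := 1) atTop
      (fun n => Real.one_le_rpow (h1 _) (by positivity))
  calc limsup (fun n : ℕ => (h (g^[n] x)) ^ ((n : ℝ)⁻¹)) atTop
      ≤ limsup (fun n : ℕ => a ^ ((m : ℝ)⁻¹) * (M + C) ^ ((n : ℝ)⁻¹)) atTop :=
        limsup_le_limsup hev hcb htend.isBoundedUnder_le
    _ = a ^ ((m : ℝ)⁻¹) := htend.limsup_eq
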